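/- Let κ ≥ 0, λ real with κ + |λ| > 0, p ≠ 0, h > 0 with |ph| < π, z = ph, and n ≥ 1. With A_m = (2^{m+2}κ/(3^m h²)) sin^{2m+2}(z/2) and B_m = (2^m λ/(3^m h)) sin z sin^{2m}(z/2), define ω_n = -∑_{m=0}^{n}(A_m + iB_m) and ω_G = -∑_{m=0}^{∞}(A_m + iB_m) (the series converges since (2/3)sin²(z/2) < 1). Then |ω_G - ω_{n+1}| < |ω_G - ω_n|. -/

import Mathlib

open Finset in
theorem stmt_11 (kappa lam p h : ℝ) (hkappa : 0 ≤ kappa) (hpos : 0 < kappa + |lam|)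
    (hp : p ≠ 0) (hh : 0 < h) (hz : |p*h| < Real.pi) (n : ℕ) (hn : 1 ≤ n) :
    let z := p * h
    let A : ℕ → ℝ := fun m => 2^(m+2) * kappa / (3^m * h^2) * Real.sin (z/2)^(2*m+2)
    let B : ℕ → ℝ := fun m => 2^m * lam / (3^m * h) * Real.sin z * Real.sin (z/2)^(2*m)
    let omega : ℕ → ℂ := fun m => -(∑ j ∈ range (m+1), ((A j : ℂ) + Complex.I * (B j : ℂ)))
    let omegaG : ℂ := -(∑' j : ℕ, ((A j : ℂ) + Complex.I * (B j : ℂ)))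
    ‖omegaG - omega (n+1)‖ < ‖omegaG - omega n‖ := by
  intro z A B omega omegaG
  have hz0 : z ≠ 0 := mul_ne_zero hp hh.ne'
  have hzlt := abs_lt.mp hz
  have hzeq : z = p * h := rfl
  set s : ℝ := Real.sin (z/2) with hsdef
  have hs0 : s ≠ 0 := by
    have h1 : -Real.pi < z/2 := by rw [hzeq]; linarith [Real.pi_pos, hzlt.1]
    have h2 : z/2 < Real.pi := by rw [hzeq]; linarith [Real.pi_pos, hzlt.2]
    intro hcon
    have := (Real.sin_eq_zero_iff_of_lt_of_lt h1 h2).mp hcon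
    exact hz0 (by linarith)
  set q : ℝ := 2*s^2/3 with hqdef
  have hq0 : 0 < q := by positivity
  have hq1 : q < 1 := by nlinarith [Real.sin_sq_le_one (z/2)]
  set a : ℝ := 4*kappa*s^2/h^2 with hadef
  set b : ℝ := lam * Real.sin z / h with hbdef
  set C : ℂ := (a:ℂ) + Complex.I * (b:ℂ) with hCdef
  have hf : ∀ j : ℕ, (A j : ℂ) + Complex.I * (B j : ℂ) = C * (q:ℂ)^j := by
    intro j
    have hA : A j = a * q^j := by
      show 2^(j+2) * kappa / (3^j * h^2) * Real.sin (z/2)^(2*j+2) = a * q^j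
      rw [hadef, hqdef, ← hsdef, pow_add (s) (2*j) 2, pow_mul, div_pow, mul_pow]
      field_simp
      ring
    have hB : B j = b * q^j := by
      show 2^j * lam / (3^j * h) * Real.sin z * Real.sin (z/2)^(2*j) = b * q^j
      rw [hbdef, hqdef, ← hsdef, pow_mul, div_pow, mul_pow]
      field_simp
    rw [hA, hB, hCdef]
    push_cast
    ring
  have hnorm : ‖(q:ℂ)‖ < 1 := by
    rw [Complex.norm_real, Real.norm_eq_abs, abs_of_pos hq0]; exact hq1
  have hgeo : Summable (fun i : ℕ => (q:ℂ)^i) := summable_geometric_of_norm_lt_one hnorm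
  have hsum : Summable (fun j : ℕ => (A j : ℂ) + Complex.I * (B j : ℂ)) := by
    simpa only [hf] using hgeo.mul_left C
  have hC0 : C ≠ 0 := by
    intro hCz
    have hab : a = 0 ∧ b = 0 := by
      simpa [hCdef, Complex.ext_iff] using hCz
    rcases lt_or_eq_of_le hkappa with hk | hk
    · have : 0 < a := by rw [hadef]; positivity
      linarith [hab.1]
    · have hlam : lam ≠ 0 := by
        intro hl
        rw [← hk, hl] at hpos
        simp at hpos
      have hsz : Real.sin z ≠ 0 := by
        intro hcon
        have := (Real.sin_eq_zero_iff_of_lt_of_lt hzlt.1 hzlt.2).mp hcon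
        exact hz0 this
      have : b ≠ 0 := by
        rw [hbdef]
        exact div_ne_zero (mul_ne_zero hlam hsz) hh.ne'
      exact this hab.2
  have key : ∀ k : ℕ, ‖omegaG - omega k‖
      = ‖C‖ * q^(k+1) * (1-q)⁻¹ := by
    intro k
    have htail : omegaG - omega k
        = -∑' i : ℕ, ((A (i+(k+1)) : ℂ) + Complex.I * (B (i+(k+1)) : ℂ)) := by
      simp only [omegaG, omega]
      rw [← hsum.sum_add_tsum_nat_add (k+1)]
      ring
    have htsum : (∑' i : ℕ, ((A (i+(k+1)) : ℂ) + Complex.I * (B (i+(k+1)) : ℂ)))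
        = C * (q:ℂ)^(k+1) * (1 - (q:ℂ))⁻¹ := by
      simp only [hf]
      have : ∀ i : ℕ, C * (q:ℂ)^(i+(k+1)) = (C * (q:ℂ)^(k+1)) * (q:ℂ)^i := by
        intro i; rw [pow_add]; ring
      simp only [this]
      rw [tsum_mul_left, tsum_geometric_of_norm_lt_one hnorm]
    rw [htail, htsum, norm_neg, norm_mul, norm_mul, norm_pow]
    have h1 : ‖(q:ℂ)‖ = q := by
      rw [Complex.norm_real, Real.norm_eq_abs, abs_of_pos hq0]
    have h2 : ‖(1 - (q:ℂ))⁻¹‖ = (1-q)⁻¹ := by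
      rw [norm_inv]
      have : (1 : ℂ) - (q:ℂ) = ((1-q : ℝ) : ℂ) := by push_cast; ring
      rw [this, Complex.norm_real, Real.norm_eq_abs, abs_of_pos (by linarith)]
    rw [h1, h2]
  rw [key n, key (n+1)]
  have habsC : 0 < ‖C‖ := norm_pos_iff.mpr hC0
  have h1q : 0 < (1-q)⁻¹ := inv_pos.mpr (by linarith)
  have hlt : q^(n+1+1) < q^(n+1) := by
    have hp1 : 0 < q^(n+1) := pow_pos hq0 (n+1)
    calc q^(n+1+1) = q^(n+1) * q := pow_succ q (n+1)
    _ < q^(n+1) * 1 := by nlinarith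
    _ = q^(n+1) := mul_one _
  exact mul_lt_mul_of_pos_right (mul_lt_mul_of_pos_left hlt habsC) h1q
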